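/- Let r, r̃ ∈ ℝ^{m+1} and suppose there exists an s×s matrix T such that (r̃ ⊗ I_s) = (r ⊗ I_s) T. Then r̃ and r are collinear: there exists a scalar τ ∈ ℝ such that r̃ = τ r (indeed T = τ I_s when r ≠ 0). -/

import Mathlib

open Matrix

/-- If `(r̃ ⊗ I_s) = (r ⊗ I_s) T` for some `s × s` matrix `T` (with `s ≥ 1`),
then `r̃ = τ r` for some scalar `τ`, and indeed `T = τ I_s` when `r ≠ 0`. -/
theorem kronecker_collinear (m s : ℕ) (hs : 0 < s)
    (r rt : Fin (m + 1) → ℝ) (T : Matrix (Fin s) (Fin s) ℝ)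
    (hT : (Matrix.of fun (p : Fin (m + 1) × Fin s) (j : Fin s) =>
            rt p.1 * (1 : Matrix (Fin s) (Fin s) ℝ) p.2 j) =
          (Matrix.of fun (p : Fin (m + 1) × Fin s) (j : Fin s) =>
            r p.1 * (1 : Matrix (Fin s) (Fin s) ℝ) p.2 j) * T) :
    ∃ τ : ℝ, rt = τ • r ∧ (r ≠ 0 → T = τ • (1 : Matrix (Fin s) (Fin s) ℝ)) := by
  -- Entrywise form of the hypothesis
  have key : ∀ (i : Fin (m + 1)) (k j : Fin s),
      rt i * (1 : Matrix (Fin s) (Fin s) ℝ) k j = r i * T k j := by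
    intro i k j
    have h := congrFun (congrFun hT (i, k)) j
    simp only [Matrix.mul_apply, Matrix.of_apply] at h
    rw [h]
    rw [Finset.sum_eq_single k]
    · simp
    · intro b _ hb
      simp [Matrix.one_apply_ne' hb]
    · simp
  obtain ⟨k0⟩ : Nonempty (Fin s) := ⟨⟨0, hs⟩⟩
  by_cases hr : r = 0
  · refine ⟨0, ?_, fun h => absurd hr h⟩
    funext i
    have := key i k0 k0
    simp [hr] at this
    simp [this]
  · obtain ⟨i0, hi0⟩ : ∃ i, r i ≠ 0 := by
      by_contra h
      push_neg at h
      exact hr (funext h)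
    refine ⟨rt i0 / r i0, ?_, ?_⟩
    · funext i
      have h1 := key i k0 k0
      have h2 := key i0 k0 k0
      simp [Matrix.one_apply_eq] at h1 h2
      simp only [Pi.smul_apply, smul_eq_mul]
      rw [h1, h2]
      field_simp
    · intro _
      funext k j
      have h := key i0 k j
      have hTkj : T k j = rt i0 / r i0 * (1 : Matrix (Fin s) (Fin s) ℝ) k j := by
        field_simp
        linarith [h]
      simp [hTkj]
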